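/- arXiv:1007.2711 — 6 statements merged into one kernel-verified Lean document; each statement's English description precedes it below -/
import Mathlib

section
/- Let K be a field of characteristic zero and P_n = K[x_1,…,x_n]. For any nonzero element a of K, any index i, and any polynomial g ∈ P_n, there exists a polynomial f ∈ P_n such that g(x_1,…,x_i,…,x_n) = f(x_1,…,x_i + a,…,x_n) − f(x_1,…,x_i,…,x_n); that is, g = σ(f) − f, where σ is the K-algebra endomorphism of P_n sending x_i to x_i + a and fixing all other variables. -/
/-!
The image of `σ - 1` is a `K`-subspace, and `(σ - 1)(p * q) = p * (σ - 1) q` whenever `σ p = p`.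
Since `σ(x_i) = x_i + a`, the difference `(σ - 1)(x_i ^ (k + 1))` is `(k + 1) a x_i ^ k` plus
lower powers of `x_i`; as `(k + 1) a ≠ 0` in characteristic zero, induction puts every power
`x_i ^ k` in the image. A monomial is a power of `x_i` times a monomial fixed by `σ`.
-/

open MvPolynomial Finset

section Difference

variable {R A : Type*} [CommSemiring R] [CommRing A] [Algebra R A]

theorem add_algebraMap_pow_succ_sub_pow (x : A) (a : R) (k : ℕ) :
    (x + algebraMap R A a) ^ (k + 1) - x ^ (k + 1) =
      ((k + 1) * a) • x ^ k + ∑ j ∈ range k, ((k + 1).choose j * a ^ (k + 1 - j)) • x ^ j := by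
  rw [add_pow, sum_range_succ, sum_range_succ]
  simp only [Algebra.smul_def, map_mul, map_pow, map_natCast, map_add, map_one,
    Nat.sub_self, pow_zero, Nat.choose_self, Nat.cast_one, mul_one, add_tsub_cancel_left, pow_one,
    Nat.choose_succ_self_right]
  push_cast
  ring_nf

theorem mul_mem_range_sub_one_of_map_eq {σ : A →ₐ[R] A} {p q : A} (hp : σ p = p)
    (hq : q ∈ LinearMap.range (σ.toLinearMap - 1)) :
    p * q ∈ LinearMap.range (σ.toLinearMap - 1) := by
  obtain ⟨f, rfl⟩ := hq
  exact ⟨p * f, by simp [hp, mul_sub]⟩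

end Difference

theorem pow_mem_range_sub_one_of_map_eq_add {K A : Type*} [Field K] [CharZero K] [CommRing A]
    [Algebra K A] {σ : A →ₐ[K] A} {x : A} {a : K} (ha : a ≠ 0)
    (hx : σ x = x + algebraMap K A a) (k : ℕ) :
    x ^ k ∈ LinearMap.range (σ.toLinearMap - 1) := by
  set S := LinearMap.range (σ.toLinearMap - 1)
  induction k using Nat.strong_induction_on with
  | _ k ih =>
    have hdiff : (σ.toLinearMap - 1) (x ^ (k + 1)) =
        ((k + 1) * a) • x ^ k + ∑ j ∈ range k, ((k + 1).choose j * a ^ (k + 1 - j)) • x ^ j := by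
      simp [hx, add_algebraMap_pow_succ_sub_pow]
    have hlead : ((k + 1) * a) • x ^ k ∈ S := by
      rw [eq_sub_of_add_eq hdiff.symm]
      exact S.sub_mem (LinearMap.mem_range_self _ _)
        (S.sum_mem fun j hj => S.smul_mem _ (ih j (mem_range.mp hj)))
    have hunit : ((k + 1) * a : K) ≠ 0 := mul_ne_zero (Nat.cast_add_one_ne_zero k) ha
    exact (S.smul_mem_iff hunit).mp hlead

theorem MvPolynomial.aeval_eq_self_of_forall_mem_vars {σ R : Type*} [CommSemiring R]
    {f : σ → MvPolynomial σ R} {p : MvPolynomial σ R} (hf : ∀ j ∈ p.vars, f j = X j) :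
    aeval f p = p := by
  conv_rhs => rw [← aeval_X_left_apply p]
  exact eval₂Hom_congr' rfl (fun j hj _ => hf j hj) rfl

/-- For any nonzero `a : K`, any index `i`, and any polynomial
`g ∈ K[x_1,…,x_n]`, there is a polynomial `f` with `g = σ(f) - f`, where `σ` is the
`K`-algebra endomorphism of `K[x_1,…,x_n]` sending `x_i` to `x_i + a` and fixing the
other variables. -/
theorem bardakov_lemma2_polynomial (K : Type*) [Field K] [CharZero K] (n : ℕ)
    (a : K) (ha : a ≠ 0) (i : Fin n) (g : MvPolynomial (Fin n) K) :
    ∃ f : MvPolynomial (Fin n) K,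
      g = (aeval (fun j : Fin n => if j = i then X j + C a else X j)) f - f := by
  set σ := aeval (R := K) fun j : Fin n => if j = i then X j + C a else X j
  suffices g ∈ LinearMap.range (σ.toLinearMap - 1) by
    obtain ⟨f, hf⟩ := this
    exact ⟨f, hf.symm⟩
  rw [g.as_sum]
  refine Submodule.sum_mem _ fun d _ => ?_
  have hsplit : monomial d (coeff d g) = monomial (d.erase i) (coeff d g) * X i ^ d i := by
    rw [mul_comm, ← monomial_single_add, Finsupp.single_add_erase]
  have hfixed : σ (monomial (d.erase i) (coeff d g)) = monomial (d.erase i) (coeff d g) := by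
    refine aeval_eq_self_of_forall_mem_vars fun j hj => ?_
    obtain ⟨e, he, hje⟩ := (mem_vars_iff_mem_support j).mp hj
    rw [Finset.mem_singleton.mp (support_monomial_subset he), Finsupp.support_erase] at hje
    simp [Finset.ne_of_mem_erase hje]
  rw [hsplit]
  have hshift : σ (X i) = X i + algebraMap K _ a := by simp [σ, algebraMap_eq]
  exact mul_mem_range_sub_one_of_map_eq hfixed (pow_mem_range_sub_one_of_map_eq_add ha hshift _)
end

section
/- Let K be a field of characteristic zero and A_n = K⟨x_1,…,x_n⟩ the free associative algebra. For any nonzero element a of K, any index i, and any element g ∈ A_n, there exists f ∈ A_n such that g = σ(f) − f, where σ is the K-algebra endomorphism of A_n sending the free generator x_i to x_i + a·1 and fixing all other free generators. -/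
namespace Bardakov2

open FreeAlgebra

variable {K : Type*} [Field K] [CharZero K] {n : ℕ}

noncomputable def sigma (K : Type*) [Field K] {n : ℕ} (a : K) (i : Fin n) :
    FreeAlgebra K (Fin n) →ₐ[K] FreeAlgebra K (Fin n) :=
  FreeAlgebra.lift K (fun j : Fin n =>
    if j = i then FreeAlgebra.ι K j + algebraMap K (FreeAlgebra K (Fin n)) a
    else FreeAlgebra.ι K j)

noncomputable def delta (a : K) (i : Fin n) : Module.End K (FreeAlgebra K (Fin n)) :=
  (sigma K a i).toLinearMap - LinearMap.id

lemma delta_apply (a : K) (i : Fin n) (f : FreeAlgebra K (Fin n)) :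
    delta a i f = sigma K a i f - f := rfl

lemma sigma_ι (a : K) (i j : Fin n) :
    sigma K a i (ι K j) = ι K j + algebraMap K _ (if j = i then a else 0) := by
  rw [sigma, FreeAlgebra.lift_ι_apply]
  split_ifs with h <;> simp

lemma delta_ι_mul (a : K) (i j : Fin n) (f : FreeAlgebra K (Fin n)) :
    delta a i (ι K j * f)
      = ι K j * delta a i f + (if j = i then a else 0) • sigma K a i f := by
  simp only [delta_apply, map_mul, sigma_ι, Algebra.smul_def]
  noncomm_ring

lemma delta_sigma_comm (a : K) (i : Fin n) (f : FreeAlgebra K (Fin n)) :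
    delta a i (sigma K a i f) = sigma K a i (delta a i f) := by
  simp [delta_apply, map_sub]

lemma sigma_eq_add (a : K) (i : Fin n) (f : FreeAlgebra K (Fin n)) :
    sigma K a i f = f + delta a i f := by
  rw [delta_apply]; abel

lemma delta_pow_ι_mul (a : K) (i j : Fin n) :
    ∀ (m : ℕ) (f : FreeAlgebra K (Fin n)),
      (delta a i ^ (m + 1)) (ι K j * f)
        = ι K j * ((delta a i ^ (m + 1)) f)
          + (((m : K) + 1) * (if j = i then a else 0)) •
              sigma K a i ((delta a i ^ m) f) := by
  intro m
  induction m with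
  | zero =>
    intro f
    simpa [pow_one] using delta_ι_mul a i j f
  | succ m IH =>
    intro f
    have hL : (delta a i ^ (m + 2)) (ι K j * f)
        = delta a i ((delta a i ^ (m + 1)) (ι K j * f)) := by
      rw [← Module.End.mul_apply, ← pow_succ']
    have h1 : delta a i ((delta a i ^ (m + 1)) f) = (delta a i ^ (m + 2)) f := by
      rw [← Module.End.mul_apply, ← pow_succ']
    have h2 : delta a i ((delta a i ^ m) f) = (delta a i ^ (m + 1)) f := by
      rw [← Module.End.mul_apply, ← pow_succ']
    rw [hL, IH, map_add, map_smul, delta_ι_mul, delta_sigma_comm, h2, h1,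
      add_assoc, ← add_smul]
    congr 2
    push_cast
    ring

lemma delta_pow_x (a : K) (i : Fin n) (d : ℕ) :
    delta a i ((ι K i) ^ (d + 1)) =
      ∑ k ∈ Finset.range (d + 1),
        (((d + 1).choose k : K) * a ^ (d + 1 - k)) • (ι K i) ^ k := by
  have hc : Commute (ι K i) (algebraMap K (FreeAlgebra K (Fin n)) a) :=
    (Algebra.commutes a _).symm
  have hσ : sigma K a i ((ι K i) ^ (d + 1))
      = ((ι K i) + algebraMap K (FreeAlgebra K (Fin n)) a) ^ (d + 1) := by
    rw [map_pow, sigma_ι, if_pos rfl]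
  rw [delta_apply, hσ, hc.add_pow, Finset.sum_range_succ]
  simp only [Nat.sub_self, pow_zero, mul_one, Nat.choose_self, Nat.cast_one]
  rw [add_sub_cancel_right]
  refine Finset.sum_congr rfl fun k hk => ?_
  rw [← map_pow]
  rw [show (((d + 1).choose k : FreeAlgebra K (Fin n)))
      = algebraMap K (FreeAlgebra K (Fin n)) (((d + 1).choose k : K)) by
    rw [map_natCast]]
  simp only [Algebra.algebraMap_eq_smul_one, smul_mul_assoc, mul_smul_comm, smul_smul,
    mul_one, one_mul, mul_comm]

lemma pow_mem_map (a : K) (ha : a ≠ 0) (i : Fin n) :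
    ∀ d : ℕ, (ι K i) ^ d ∈
      (Submodule.span K (Set.range fun e : ℕ => (ι K i) ^ e)).map (delta a i) := by
  intro d
  induction d using Nat.strong_induction_on with
  | _ d IH =>
  set S := Submodule.span K (Set.range fun e : ℕ => (ι K i) ^ e) with hS
  set M := S.map (delta a i) with hM
  have key := delta_pow_x a i d
  rw [Finset.sum_range_succ] at key
  have hchoose : ((d + 1).choose d : K) = (d : K) + 1 := by
    rw [Nat.choose_succ_self_right]; push_cast; ring
  have hcd : (((d + 1).choose d : K) * a ^ (d + 1 - d)) = ((d : K) + 1) * a := by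
    have h1 : d + 1 - d = 1 := by omega
    rw [hchoose, h1, pow_one]
  have e1 : (((d : K) + 1) * a) • (ι K i) ^ d
      = delta a i ((ι K i) ^ (d + 1))
        - ∑ k ∈ Finset.range d, (((d + 1).choose k : K) * a ^ (d + 1 - k)) • (ι K i) ^ k := by
    rw [key, hcd]
    abel
  have hmem1 : delta a i ((ι K i) ^ (d + 1)) ∈ M :=
    Submodule.mem_map_of_mem (Submodule.subset_span ⟨d + 1, rfl⟩)
  have hmem2 : (∑ k ∈ Finset.range d,
      (((d + 1).choose k : K) * a ^ (d + 1 - k)) • (ι K i) ^ k) ∈ M := by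
    refine Submodule.sum_mem _ fun k hk => ?_
    exact Submodule.smul_mem _ _ (IH k (Finset.mem_range.mp hk))
  have hmem : (((d : K) + 1) * a) • (ι K i) ^ d ∈ M := by
    rw [e1]; exact sub_mem hmem1 hmem2
  have hc : ((d : K) + 1) * a ≠ 0 := by
    refine mul_ne_zero ?_ ha
    exact_mod_cast Nat.cast_add_one_ne_zero (R := K) d
  have := M.smul_mem (((d : K) + 1) * a)⁻¹ hmem
  rwa [smul_smul, inv_mul_cancel₀ hc, one_smul] at this

lemma one_mem_range (a : K) (ha : a ≠ 0) (i : Fin n) (m : ℕ) :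
    (1 : FreeAlgebra K (Fin n)) ∈ LinearMap.range (delta a i ^ m) := by
  set S := Submodule.span K (Set.range fun e : ℕ => (ι K i) ^ e) with hS
  have h1 : S ≤ S.map (delta a i) := by
    rw [Submodule.span_le]
    rintro _ ⟨e, rfl⟩
    exact pow_mem_map a ha i e
  have hm : ∀ m, S ≤ S.map (delta a i ^ m) := by
    intro m
    induction m with
    | zero => simp [pow_zero, Module.End.one_eq_id, Submodule.map_id]
    | succ m IH =>
      calc S ≤ S.map (delta a i ^ m) := IH
        _ ≤ (S.map (delta a i)).map (delta a i ^ m) := Submodule.map_mono h1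
        _ = S.map (delta a i ^ (m + 1)) := by
            rw [← Submodule.map_comp, ← Module.End.mul_eq_comp, ← pow_succ]
  have h1S : (1 : FreeAlgebra K (Fin n)) ∈ S := by
    refine Submodule.subset_span ⟨0, ?_⟩
    simp
  obtain ⟨y, _, hy⟩ := hm m h1S
  exact ⟨y, hy⟩

lemma left_mul_mem (a : K) (i j : Fin n) (f : FreeAlgebra K (Fin n))
    (hf : ∀ m, f ∈ LinearMap.range (delta a i ^ m)) (m : ℕ) :
    ι K j * f ∈ LinearMap.range (delta a i ^ m) := by
  cases m with
  | zero => exact ⟨ι K j * f, rfl⟩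
  | succ m =>
    obtain ⟨F, hF⟩ := hf (2 * m + 2)
    have e : ∀ p q r : ℕ, p + q = r →
        (delta a i ^ p) ((delta a i ^ q) F) = (delta a i ^ r) F := by
      intro p q r hpq; rw [← Module.End.mul_apply, ← pow_add, hpq]
    have e1 : delta a i ((delta a i ^ (2 * m + 1)) F) = (delta a i ^ (2 * m + 2)) F := by
      rw [← Module.End.mul_apply, ← pow_succ']
    set h := (delta a i ^ (m + 1)) F with hh
    have hfh : (delta a i ^ (m + 1)) h = f := by
      rw [hh, e (m + 1) (m + 1) (2 * m + 2) (by ring), hF]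
    have hσ : sigma K a i ((delta a i ^ m) h)
        = (delta a i ^ (m + 1)) ((delta a i ^ m) F + (delta a i ^ (m + 1)) F) := by
      rw [sigma_eq_add, hh, map_add, e m (m + 1) (2 * m + 1) (by ring), e1,
        e (m + 1) m (2 * m + 1) (by ring), e (m + 1) (m + 1) (2 * m + 2) (by ring)]
    set c : K := ((m : K) + 1) * (if j = i then a else 0) with hcdef
    refine ⟨ι K j * h - c • ((delta a i ^ m) F + (delta a i ^ (m + 1)) F), ?_⟩
    rw [map_sub, map_smul, delta_pow_ι_mul, hfh, hσ, ← hcdef, add_sub_cancel_right]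

lemma mul_mem_range (a : K) (i : Fin n) (f : FreeAlgebra K (Fin n)) :
    ∀ g, (∀ m, g ∈ LinearMap.range (delta a i ^ m)) →
      ∀ m, f * g ∈ LinearMap.range (delta a i ^ m) := by
  induction f using FreeAlgebra.induction with
  | grade0 r =>
    intro g hg m
    rw [← Algebra.smul_def]
    exact Submodule.smul_mem _ r (hg m)
  | grade1 j =>
    intro g hg m
    exact left_mul_mem a i j g hg m
  | mul p q hp hq =>
    intro g hg m
    rw [mul_assoc]
    exact hp _ (hq g hg) m
  | add p q hp hq =>
    intro g hg m
    rw [add_mul]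
    exact add_mem (hp g hg m) (hq g hg m)

end Bardakov2

/-- **Statement 2.** For any nonzero `a : K`, any index `i`, and any element `g` of the
free associative algebra `K⟨x_1,…,x_n⟩`, there is `f` with `g = σ(f) - f`, where `σ` is
the `K`-algebra endomorphism sending the free generator `x_i` to `x_i + a·1` and fixing
the other free generators. -/
theorem bardakov_lemma2_free_algebra (K : Type*) [Field K] [CharZero K] (n : ℕ)
    (a : K) (ha : a ≠ 0) (i : Fin n) (g : FreeAlgebra K (Fin n)) :
    ∃ f : FreeAlgebra K (Fin n),
      g = (FreeAlgebra.lift K (fun j : Fin n =>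
            if j = i then FreeAlgebra.ι K j + algebraMap K (FreeAlgebra K (Fin n)) a
            else FreeAlgebra.ι K j)) f - f := by
  have hg : g ∈ LinearMap.range (Bardakov2.delta a i ^ 1) := by
    simpa using Bardakov2.mul_mem_range a i g 1
      (fun m => Bardakov2.one_mem_range a ha i m) 1
  obtain ⟨f, hf⟩ := hg
  refine ⟨f, ?_⟩
  rw [pow_one] at hf
  rw [← hf]
  rfl
end

section
/- Let K be a field of characteristic zero. Let φ = σ(1, α, f) and ψ = σ(1, β, g) be elementary automorphisms of P_n = K[x_1,…,x_n] with f ≠ 0 and g ≠ 0 not involving x_1. If α ≠ 1 or β ≠ 1, then the subgroup ⟨φ, ψ⟩ is metabelian, i.e. its commutator subgroup is abelian (its second derived subgroup is trivial). -/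
/-!
For a fixed variable `x_i`, the automorphisms `σ(i, a, h)` with `a` a unit and `h` free of `x_i`
form a group: they fix every `h` free of `x_i`, so they compose like the affine maps
`x ↦ a x + h`. Reading off `a` (the coefficient of `x_i` in the image of `x_i`) is a homomorphism
to `Rˣ` whose kernel consists of the translations `x_i ↦ x_i + h`, and these commute with each
other. A group with an abelian kernel over an abelian quotient is metabelian, and so is its
subgroup `⟨φ, ψ⟩`.
-/

open MvPolynomial

noncomputable section

/-- The group of `K`-algebra automorphisms of the polynomial algebra `P_n = K[x_1,…,x_n]`. -/
abbrev PAut (K : Type*) [Field K] (n : ℕ) :=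
  MvPolynomial (Fin n) K ≃ₐ[K] MvPolynomial (Fin n) K

theorem derivedSeries_two_eq_bot_of_commute_ker {G A : Type*} [Group G] [CommGroup A]
    (f : G →* A) (hker : ∀ x ∈ f.ker, ∀ y ∈ f.ker, Commute x y) :
    derivedSeries G 2 = ⊥ := by
  have hcomm : commutator G ≤ f.ker := Abelianization.commutator_subset_ker f
  rw [derivedSeries_succ, derivedSeries_one, eq_bot_iff]
  calc ⁅commutator G, commutator G⁆ ≤ ⁅f.ker, f.ker⁆ :=
        Subgroup.commutator_mono hcomm hcomm
    _ = ⊥ := Subgroup.commutator_eq_bot_iff_le_centralizer.mpr fun x hx =>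
      Subgroup.mem_centralizer_iff.mpr fun y hy => hker y hy x hx

theorem derivedSeries_eq_bot_of_injective {G G' : Type*} [Group G] [Group G'] {f : G →* G'}
    (hf : Function.Injective f) {n : ℕ} (h : derivedSeries G' n = ⊥) :
    derivedSeries G n = ⊥ := by
  rw [← Subgroup.map_eq_bot_iff_of_injective (H := derivedSeries G n) hf, eq_bot_iff, ← h]
  exact map_derivedSeries_le_derivedSeries f n

namespace MvPolynomial

section CommSemiring

variable {R σ : Type*} [CommSemiring R]

theorem apply_eq_self_of_mem_supported {F : Type*}
    [FunLike F (MvPolynomial σ R) (MvPolynomial σ R)]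
    [AlgHomClass F R (MvPolynomial σ R) (MvPolynomial σ R)] (θ : F) {s : Set σ}
    (hθ : ∀ j ∈ s, θ (X j) = X j) {p : MvPolynomial σ R} (hp : p ∈ supported R s) : θ p = p :=
  AlgHom.adjoin_le_equalizer (AlgHomClass.toAlgHom θ) (AlgHom.id R _)
    (by rintro _ ⟨j, hj, rfl⟩; exact hθ j hj) hp

theorem coeff_eq_zero_of_mem_supported {s : Set σ} {p : MvPolynomial σ R}
    (hp : p ∈ supported R s) {m : σ →₀ ℕ} {i : σ} (hi : i ∉ s) (hm : m i ≠ 0) :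
    coeff m p = 0 := by
  by_contra h
  exact hm (mem_support_notMem_vars_zero (mem_support_iff.mpr h) fun hv =>
    hi (mem_supported.mp hp hv))

end CommSemiring

variable {R σ : Type*} [CommRing R]

/-- `θ = σ(i, a, h)` in the notation of the paper, for some `h` not involving `X i`. -/
def IsElementaryAut (i : σ) (a : R) (θ : MvPolynomial σ R ≃ₐ[R] MvPolynomial σ R) : Prop :=
  (∀ j ≠ i, θ (X j) = X j) ∧ ∃ h ∈ supported R {i}ᶜ, θ (X i) = C a * X i + h

namespace IsElementaryAut

variable {i : σ} {a b : R} {θ θ' : MvPolynomial σ R ≃ₐ[R] MvPolynomial σ R}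

theorem one (i : σ) : IsElementaryAut i (1 : R) 1 :=
  ⟨fun _ _ => rfl, 0, Subalgebra.zero_mem _, by simp⟩

theorem mul (hθ : IsElementaryAut i a θ) (hθ' : IsElementaryAut i b θ') :
    IsElementaryAut i (a * b) (θ * θ') := by
  obtain ⟨hfix, h, hh, hθi⟩ := hθ
  obtain ⟨hfix', k, hk, hθ'i⟩ := hθ'
  refine ⟨fun j hj => by rw [AlgEquiv.mul_apply, hfix' j hj, hfix j hj], C b * h + k,
    Subalgebra.add_mem _ (Subalgebra.mul_mem _ (Subalgebra.algebraMap_mem _ b) hh) hk, ?_⟩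
  have hC : θ (C b) = C b := θ.commutes b
  rw [AlgEquiv.mul_apply, hθ'i, map_add, map_mul, hC, hθi,
    apply_eq_self_of_mem_supported θ hfix hk, C_mul]
  ring

theorem inv {a : Rˣ} (hθ : IsElementaryAut i (a : R) θ) :
    IsElementaryAut i ((a⁻¹ : Rˣ) : R) θ⁻¹ := by
  obtain ⟨hfix, h, hh, hθi⟩ := hθ
  refine ⟨fun j hj => θ.symm_apply_eq.mpr (hfix j hj).symm, -(C ((a⁻¹ : Rˣ) : R) * h),
    neg_mem (Subalgebra.mul_mem _ (Subalgebra.algebraMap_mem _ _) hh), ?_⟩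
  have hC : θ (C ((a⁻¹ : Rˣ) : R)) = C ((a⁻¹ : Rˣ) : R) := θ.commutes _
  have hCa : C ((a⁻¹ : Rˣ) : R) * C (a : R) = (1 : MvPolynomial σ R) := by
    rw [← C_mul, Units.inv_mul, C_1]
  show θ.symm (X i) = _
  rw [θ.symm_apply_eq, map_add, map_neg, map_mul, map_mul, hC, hθi,
    apply_eq_self_of_mem_supported θ hfix hh]
  linear_combination -(X i) * hCa

theorem coeff_X (hθ : IsElementaryAut i a θ) : coeff (Finsupp.single i 1) (θ (X i)) = a := by
  obtain ⟨-, h, hh, hθi⟩ := hθ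
  rw [hθi, coeff_add, coeff_C_mul, coeff_X_same, mul_one,
    coeff_eq_zero_of_mem_supported hh (i := i) (by simp) (by simp), add_zero]

theorem commute (hθ : IsElementaryAut i 1 θ) (hθ' : IsElementaryAut i 1 θ') :
    Commute θ θ' := by
  obtain ⟨hfix, h, hh, hθi⟩ := hθ
  obtain ⟨hfix', k, hk, hθ'i⟩ := hθ'
  rw [map_one, one_mul] at hθi hθ'i
  refine AlgEquiv.coe_toAlgHom_injective (algHom_ext fun j => ?_)
  show θ (θ' (X j)) = θ' (θ (X j))
  by_cases hj : j = i
  · subst hj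
    rw [hθ'i, map_add, hθi, map_add, hθ'i, apply_eq_self_of_mem_supported θ hfix hk,
      apply_eq_self_of_mem_supported θ' hfix' hh, add_right_comm]
  · rw [hfix' j hj, hfix j hj, hfix' j hj]

end IsElementaryAut

variable (R) in
def elementaryAutGroup (i : σ) : Subgroup (MvPolynomial σ R ≃ₐ[R] MvPolynomial σ R) where
  carrier := {θ | ∃ a : Rˣ, IsElementaryAut i (a : R) θ}
  one_mem' := ⟨1, IsElementaryAut.one i⟩
  mul_mem' := fun ⟨a, ha⟩ ⟨b, hb⟩ => ⟨a * b, ha.mul hb⟩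
  inv_mem' := fun ⟨a, ha⟩ => ⟨a⁻¹, ha.inv⟩

namespace elementaryAutGroup

/-- The homomorphism `σ(i, a, h) ↦ a`. -/
def multiplier (i : σ) : elementaryAutGroup R i →* Rˣ :=
  MonoidHom.toHomUnits
    { toFun := fun θ => coeff (Finsupp.single i 1) ((θ : MvPolynomial σ R ≃ₐ[R] _) (X i))
      map_one' := coeff_X_same i
      map_mul' := fun θ θ' => by
        obtain ⟨a, ha⟩ := θ.2
        obtain ⟨b, hb⟩ := θ'.2
        rw [ha.coeff_X, hb.coeff_X]
        exact (ha.mul hb).coeff_X }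

theorem isElementaryAut_one_of_mem_ker {i : σ} {θ : elementaryAutGroup R i}
    (hθ : θ ∈ (multiplier i).ker) :
    IsElementaryAut i 1 (θ : MvPolynomial σ R ≃ₐ[R] MvPolynomial σ R) := by
  obtain ⟨a, ha⟩ := θ.2
  have ha1 : (a : R) = 1 := ha.coeff_X.symm.trans (congrArg Units.val hθ)
  rwa [ha1] at ha

end elementaryAutGroup

theorem derivedSeries_elementaryAutGroup_two (i : σ) :
    derivedSeries (elementaryAutGroup R i) 2 = ⊥ :=
  derivedSeries_two_eq_bot_of_commute_ker (elementaryAutGroup.multiplier i) fun _ hθ _ hθ' =>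
    Subtype.ext ((elementaryAutGroup.isElementaryAut_one_of_mem_ker hθ).commute
      (elementaryAutGroup.isElementaryAut_one_of_mem_ker hθ')).eq

end MvPolynomial

/-- **Statement 13 (Proposition 2.1).** Let `φ = σ(1, α, f)` and `ψ = σ(1, β, g)` be
elementary automorphisms of `P_n` with `f ≠ 0`, `g ≠ 0` not involving `x_1`.  If
`α ≠ 1` or `β ≠ 1`, then `⟨φ, ψ⟩` is metabelian: its second derived subgroup is
trivial. -/
theorem bardakov_proposition2_part1 (K : Type*) [Field K]
    (n : ℕ) (hn : 2 ≤ n)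
    (α β : K) (hα : α ≠ 0) (hβ : β ≠ 0) (f g : MvPolynomial (Fin n) K)
    (hf : f ∈ Algebra.adjoin K (MvPolynomial.X '' {j : Fin n | j ≠ ⟨0, by omega⟩}))
    (hg : g ∈ Algebra.adjoin K (MvPolynomial.X '' {j : Fin n | j ≠ ⟨0, by omega⟩}))
    (φ ψ : PAut K n)
    (hφ1 : φ (X ⟨0, by omega⟩) = C α * X ⟨0, by omega⟩ + f)
    (hφ2 : ∀ j : Fin n, j ≠ ⟨0, by omega⟩ → φ (X j) = X j)
    (hψ1 : ψ (X ⟨0, by omega⟩) = C β * X ⟨0, by omega⟩ + g)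
    (hψ2 : ∀ j : Fin n, j ≠ ⟨0, by omega⟩ → ψ (X j) = X j) :
    derivedSeries (Subgroup.closure {φ, ψ}) 2 = ⊥ := by
  have hle : Subgroup.closure {φ, ψ} ≤ elementaryAutGroup K (⟨0, by omega⟩ : Fin n) := by
    rw [Subgroup.closure_le, Set.insert_subset_iff, Set.singleton_subset_iff]
    exact ⟨⟨Units.mk0 α hα, hφ2, f, hf, hφ1⟩, ⟨Units.mk0 β hβ, hψ2, g, hg, hψ1⟩⟩
  exact derivedSeries_eq_bot_of_injective (Subgroup.inclusion_injective hle)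
    (derivedSeries_elementaryAutGroup_two _)
end
end

section
/- Let K be a field of characteristic zero and σ(i, α, f) an elementary automorphism of P_n = K[x_1,…,x_n]. For any integer m > 1, the automorphism σ(i, α, f) has order m in the automorphism group of P_n if and only if α has order m in the multiplicative group K∖{0}. -/
open MvPolynomial

noncomputable section

/-- **Statement 16 (Proposition 4).** An elementary automorphism `σ(i, α, f)` of `P_n`
has order `m > 1` in `Aut P_n` if and only if `α` has order `m` in the multiplicative
group `K∖{0}`. -/
theorem bardakov_proposition4 (K : Type*) [Field K] [CharZero K] (n : ℕ)
    (i : Fin n) (α : K) (hα : α ≠ 0) (f : MvPolynomial (Fin n) K)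
    (hf : f ∈ Algebra.adjoin K (MvPolynomial.X '' {j : Fin n | j ≠ i}))
    (φ : PAut K n)
    (hφ1 : φ (X i) = C α * X i + f)
    (hφ2 : ∀ j : Fin n, j ≠ i → φ (X j) = X j)
    (m : ℕ) (hm : 1 < m) :
    orderOf φ = m ↔ orderOf (Units.mk0 α hα) = m := by
  -- pderiv i kills f
  have hpd : ∀ g ∈ Algebra.adjoin K ((MvPolynomial.X '' {j : Fin n | j ≠ i}) : Set (MvPolynomial (Fin n) K)),
      pderiv i g = 0 := by
    intro g hg
    induction hg using Algebra.adjoin_induction with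
    | mem x hx =>
      obtain ⟨j, hj, rfl⟩ := hx
      exact pderiv_X_of_ne hj
    | algebraMap r => simp [MvPolynomial.algebraMap_eq]
    | add x y hx hy ihx ihy => simp [ihx, ihy]
    | mul x y hx hy ihx ihy => simp [ihx, ihy]
  -- φ fixes f
  have hφf : ∀ g ∈ Algebra.adjoin K ((MvPolynomial.X '' {j : Fin n | j ≠ i}) : Set (MvPolynomial (Fin n) K)),
      φ g = g := by
    intro g hg
    induction hg using Algebra.adjoin_induction with
    | mem x hx =>
      obtain ⟨j, hj, rfl⟩ := hx
      exact hφ2 j hj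
    | algebraMap r => exact φ.commutes r
    | add x y hx hy ihx ihy => simp [map_add, ihx, ihy]
    | mul x y hx hy ihx ihy => simp [map_mul, ihx, ihy]
  have hφkX : ∀ (k : ℕ) (j : Fin n), j ≠ i → (φ ^ k) (X j) = X j := by
    intro k j hj
    induction k with
    | zero => rfl
    | succ k ih => rw [pow_succ', AlgEquiv.mul_apply, ih, hφ2 j hj]
  have hφkf : ∀ k : ℕ, (φ ^ k) f = f := by
    intro k
    induction k with
    | zero => rfl
    | succ k ih => rw [pow_succ', AlgEquiv.mul_apply, ih, hφf f hf]
  have key : ∀ k : ℕ, (φ ^ k) (X i) =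
      C (α ^ k) * X i + C (∑ j ∈ Finset.range k, α ^ j) * f := by
    intro k
    induction k with
    | zero => simp
    | succ k ih =>
      rw [pow_succ, AlgEquiv.mul_apply, hφ1, map_add, map_mul, hφkf, ih]
      have hCα : (φ ^ k) (C α) = C α := by
        simpa [MvPolynomial.algebraMap_eq] using (φ ^ k).commutes α
      rw [hCα, geom_sum_succ, pow_succ]
      simp only [map_mul, map_add, map_one]
      ring
  -- equality of alg equivs from values on X's
  have ext1 : ∀ k : ℕ, (∀ j : Fin n, (φ ^ k) (X j) = X j) → φ ^ k = 1 := by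
    intro k h
    have : (φ ^ k).toAlgHom = (AlgHom.id K _) := MvPolynomial.algHom_ext fun j => h j
    refine AlgEquiv.ext fun p => ?_
    have h2 := congrArg (fun (ψ : MvPolynomial (Fin n) K →ₐ[K] MvPolynomial (Fin n) K) => ψ p) this
    simpa using h2
  -- φ^k = 1 → α^k = 1
  have fact1 : ∀ k : ℕ, φ ^ k = 1 → α ^ k = 1 := by
    intro k hk
    have h1 : (φ ^ k) (X i) = X i := by rw [hk]; rfl
    rw [key k] at h1
    have := congrArg (pderiv i) h1
    simp [pderiv_X_self, hpd f hf, Derivation.leibniz] at this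
    -- this : C (α ^ k) = 1 presumably
    have : (C (α ^ k) : MvPolynomial (Fin n) K) = C 1 := by
      simpa using this
    exact MvPolynomial.C_injective _ _ this
  -- α ≠ 1, α^k = 1 → φ^k = 1
  have fact2 : α ≠ 1 → ∀ k : ℕ, α ^ k = 1 → φ ^ k = 1 := by
    intro hα1 k hk
    have hc : (∑ j ∈ Finset.range k, α ^ j) = 0 := by
      have := geom_sum_mul α k
      rw [hk, sub_self] at this
      rcases mul_eq_zero.mp this with h | h
      · exact h
      · exact absurd (sub_eq_zero.mp h) hα1
    refine ext1 k fun j => ?_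
    by_cases hj : j = i
    · subst hj; rw [key k, hk, hc]; simp
    · exact hφkX k j hj
  by_cases hα1 : α = 1
  · -- both sides are not equal to m
    subst hα1
    constructor
    · intro hφ
      exfalso
      have hφm : φ ^ m = 1 := hφ ▸ pow_orderOf_eq_one φ
      have h1 : (φ ^ m) (X i) = X i := by rw [hφm]; rfl
      rw [key m] at h1
      have hc : (∑ j ∈ Finset.range m, (1 : K) ^ j) = (m : K) := by simp
      rw [hc, one_pow, map_one, one_mul] at h1
      have h2 : C ((m : K)) * f = 0 := add_eq_left.mp h1
      have hC : (C ((m : K)) : MvPolynomial (Fin n) K) ≠ 0 := by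
        rw [Ne, MvPolynomial.C_eq_zero, Nat.cast_eq_zero]
        omega
      have hf0 : f = 0 := by
        rcases mul_eq_zero.mp h2 with h | h
        · exact absurd h hC
        · exact h
      have hφ1' : φ = 1 := by
        have := ext1 1 ?_
        · simpa using this
        · intro j
          by_cases hj : j = i
          · subst hj; simp [pow_one, hφ1, hf0]
          · simp [pow_one, hφ2 j hj]
      rw [hφ1', orderOf_one] at hφ
      omega
    · intro hu
      exfalso
      have : Units.mk0 (1 : K) hα = 1 := by ext; rfl
      rw [this, orderOf_one] at hu
      omega
  · -- α ≠ 1 : orders coincide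
    have horder : orderOf φ = orderOf (Units.mk0 α hα) := by
      rw [orderOf_eq_orderOf_iff]
      intro k
      constructor
      · intro hk
        have := fact1 k hk
        ext
        simpa using this
      · intro hk
        have : α ^ k = 1 := by
          have := congrArg Units.val hk
          simpa using this
        exact fact2 hα1 k this
    rw [horder]
end
end

section
/- Let K be a field of characteristic zero and R the ideal of P_n = K[x_1,…,x_n] generated by x_1,…,x_n (polynomials with zero constant term). If φ is a K-algebra automorphism of P_n such that φ(x_i) − x_i ∈ R² for every i, and φ has finite order (φ^m = 1 for some m ≥ 1), then φ is the identity. In particular, the group IA(P_n) of automorphisms identical modulo R² is torsion-free. -/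
open MvPolynomial

noncomputable section

/-- The augmentation ideal `R` of `P_n`: the ideal generated by the variables
`x_1,…,x_n`, i.e. the polynomials with zero constant term. -/
def augIdeal (K : Type*) [Field K] (n : ℕ) : Ideal (MvPolynomial (Fin n) K) :=
  Ideal.span (Set.range (MvPolynomial.X : Fin n → MvPolynomial (Fin n) K))

namespace BardakovAux

variable {K : Type*} [Field K] {n : ℕ}

/-- The ideal of polynomials all of whose monomials have degree at least `d`. -/
def degIdeal (K : Type*) [Field K] (n : ℕ) (d : ℕ) : Ideal (MvPolynomial (Fin n) K) where
  carrier := {f | ∀ m ∈ f.support, d ≤ m.sum fun _ e => e}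
  zero_mem' := by simp
  add_mem' := by
    intro a b ha hb m hm
    rcases Finset.mem_union.mp (MvPolynomial.support_add hm) with h | h
    · exact ha m h
    · exact hb m h
  smul_mem' := by
    intro c f hf m hm
    have := MvPolynomial.support_mul c f hm
    rcases Finset.mem_add.mp this with ⟨a, ha, b, hb, rfl⟩
    calc d ≤ b.sum fun _ e => e := hf b hb
      _ ≤ (a + b).sum fun _ e => e := by
          rw [Finsupp.sum_add_index (by simp) (by intros; rfl)]; omega

lemma augIdeal_pow_le_degIdeal : ∀ d, augIdeal K n ^ d ≤ degIdeal K n d := by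
  intro d
  induction d with
  | zero => intro f _; simp [degIdeal]
  | succ d ih =>
    rw [pow_succ, Ideal.mul_le]
    intro r hr s hs m hm
    rcases Finset.mem_add.mp (MvPolynomial.support_mul r s hm) with ⟨a, ha, b, hb, rfl⟩
    have h1 : d ≤ a.sum fun _ e => e := ih hr a ha
    have h2 : 1 ≤ b.sum fun _ e => e := by
      have := Ideal.span_le.mpr (?_ : Set.range (MvPolynomial.X : Fin n → _) ⊆
        (degIdeal K n 1 : Set (MvPolynomial (Fin n) K))) hs
      · exact this b hb
      · rintro _ ⟨i, rfl⟩ m hm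
        rw [MvPolynomial.mem_support_iff, MvPolynomial.coeff_X'] at hm
        by_cases h : Finsupp.single i 1 = m
        · subst h; simp [Finsupp.sum_single_index]
        · simp [h] at hm
    rw [Finsupp.sum_add_index (by simp) (by intros; rfl)]
    omega

lemma eq_zero_of_mem_all {f : MvPolynomial (Fin n) K} (h : ∀ d, f ∈ augIdeal K n ^ d) :
    f = 0 := by
  by_contra hf
  obtain ⟨m, hm⟩ := (MvPolynomial.support_nonempty.mpr hf)
  have h1 := augIdeal_pow_le_degIdeal (f.totalDegree + 1) (h _) m hm
  have h2 := MvPolynomial.le_totalDegree hm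
  omega

lemma maps_pow (φ : PAut K n) (hX : ∀ i, φ (X i) ∈ augIdeal K n) (d : ℕ) :
    ∀ f ∈ augIdeal K n ^ d, φ f ∈ augIdeal K n ^ d := by
  intro f hf
  have h1 : Ideal.map (φ : MvPolynomial (Fin n) K →+* MvPolynomial (Fin n) K)
      (augIdeal K n) ≤ augIdeal K n := by
    rw [augIdeal, Ideal.map_span]
    refine Ideal.span_le.mpr ?_
    rintro _ ⟨_, ⟨i, rfl⟩, rfl⟩
    exact hX i
  have h2 : Ideal.map (φ : MvPolynomial (Fin n) K →+* MvPolynomial (Fin n) K)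
      (augIdeal K n ^ d) ≤ augIdeal K n ^ d := by
    rw [Ideal.map_pow]
    exact Ideal.pow_right_mono h1 d
  exact h2 (Ideal.mem_map_of_mem _ hf)

lemma diff_mem (φ : PAut K n) (J : Ideal (MvPolynomial (Fin n) K))
    (h : ∀ i, φ (X i) - X i ∈ J) (f : MvPolynomial (Fin n) K) : φ f - f ∈ J := by
  induction f using MvPolynomial.induction_on with
  | C a =>
    have : φ (C a) = C a := by
      have := φ.commutes a
      rwa [MvPolynomial.algebraMap_eq] at this
    simp [this]
  | add p q hp hq =>
    have : φ (p + q) - (p + q) = (φ p - p) + (φ q - q) := by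
      rw [map_add]; ring
    rw [this]; exact J.add_mem hp hq
  | mul_X p i hp =>
    have : φ (p * X i) - p * X i = (φ p - p) * X i + φ p * (φ (X i) - X i) := by
      rw [map_mul]; ring
    rw [this]
    exact J.add_mem (J.mul_mem_right _ hp) (J.mul_mem_left _ (h i))

lemma diff_pow_mem (φ : PAut K n) (hX : ∀ i, φ (X i) ∈ augIdeal K n) (d : ℕ)
    (h : ∀ i, φ (X i) - X i ∈ augIdeal K n ^ d) :
    ∀ e, ∀ f ∈ augIdeal K n ^ (e + 1), φ f - f ∈ augIdeal K n ^ (e + d) := by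
  intro e
  induction e with
  | zero =>
    intro f hf
    simpa using diff_mem φ (augIdeal K n ^ d) h f
  | succ e ih =>
    intro f hf
    rw [pow_succ] at hf
    refine Submodule.mul_induction_on hf ?_ ?_
    · intro a ha b hb
      have : φ (a * b) - a * b = (φ a - a) * b + φ a * (φ b - b) := by
        rw [map_mul]; ring
      rw [this]
      refine (augIdeal K n ^ (e + 1 + d)).add_mem ?_ ?_
      · have h1 : (φ a - a) * b ∈ augIdeal K n ^ (e + d) * augIdeal K n :=
          Ideal.mul_mem_mul (ih a ha) hb
        rw [← pow_succ] at h1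
        exact (show e + d + 1 = e + 1 + d by omega) ▸ h1
      · have h1 : φ a * (φ b - b) ∈ augIdeal K n ^ (e + 1) * augIdeal K n ^ d := by
          refine Ideal.mul_mem_mul (maps_pow φ hX (e + 1) a ha) ?_
          have := diff_mem φ (augIdeal K n ^ d) h b
          exact this
        rw [← pow_add] at h1
        exact h1
    · intro x y hx hy
      have : φ (x + y) - (x + y) = (φ x - x) + (φ y - y) := by rw [map_add]; ring
      rw [this]
      exact (augIdeal K n ^ (e + 1 + d)).add_mem hx hy

end BardakovAux

/-- **Statement 17 (Proposition 5).** If `φ ∈ IA(P_n)`, i.e. `φ(x_i) - x_i ∈ R²` for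
every `i`, and `φ` has finite order, then `φ = 1`.  In particular `IA(P_n)` is
torsion-free. -/
theorem bardakov_proposition5 (K : Type*) [Field K] [CharZero K] (n : ℕ)
    (φ : PAut K n)
    (hφ : ∀ i : Fin n, φ (X i) - X i ∈ augIdeal K n ^ 2)
    (hfin : ∃ m : ℕ, 1 ≤ m ∧ φ ^ m = 1) :
    φ = 1 := by
  classical
  obtain ⟨m, hm, hφm⟩ := hfin
  have hXmem : ∀ i, (X i : MvPolynomial (Fin n) K) ∈ augIdeal K n := fun i =>
    Ideal.subset_span ⟨i, rfl⟩
  have hX : ∀ i, φ (X i) ∈ augIdeal K n := by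
    intro i
    have : φ (X i) = (φ (X i) - X i) + X i := by ring
    rw [this]
    exact (augIdeal K n).add_mem (Ideal.pow_le_self (by norm_num) (hφ i)) (hXmem i)
  -- main induction: the difference lies in every power ≥ 2
  have key : ∀ d, 2 ≤ d → ∀ i, φ (X i) - X i ∈ augIdeal K n ^ d := by
    intro d
    induction d with
    | zero => omega
    | succ d ih =>
      intro hd i
      rcases Nat.lt_or_ge d 2 with h2 | h2
      · interval_cases d
        · omega
        · exact hφ i
      have hprev : ∀ j, φ (X j) - X j ∈ augIdeal K n ^ d := ih (by omega)
      -- iterate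
      have iter : ∀ k : ℕ, (φ ^ k) (X i) - X i - (k : MvPolynomial (Fin n) K) *
          (φ (X i) - X i) ∈ augIdeal K n ^ (d + 1) := by
        intro k
        induction k with
        | zero => simp
        | succ k ihk =>
          have hpow : (φ ^ (k + 1)) (X i) = φ ((φ ^ k) (X i)) := by
            rw [pow_succ']; rfl
          set g := (φ ^ k) (X i) - X i with hg
          have hgmem : g ∈ augIdeal K n ^ d := by
            have h1 : g - (k : MvPolynomial (Fin n) K) * (φ (X i) - X i) ∈
                augIdeal K n ^ (d + 1) := ihk
            have h2 : (k : MvPolynomial (Fin n) K) * (φ (X i) - X i) ∈ augIdeal K n ^ d :=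
              Ideal.mul_mem_left _ _ (hprev i)
            have := (augIdeal K n ^ d).add_mem (Ideal.pow_le_pow_right (by omega) h1) h2
            simpa using this
          have hφg : φ g - g ∈ augIdeal K n ^ (d + 1) := by
            rcases Nat.exists_eq_add_of_le (show 1 ≤ d by omega) with ⟨e, rfl⟩
            rw [show 1 + e = e + 1 by omega] at hprev hgmem
            have := BardakovAux.diff_pow_mem φ hX (e + 1) hprev e g hgmem
            refine Ideal.pow_le_pow_right ?_ this
            omega
          have heq : (φ ^ (k + 1)) (X i) - X i - ((k : MvPolynomial (Fin n) K) + 1) *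
              (φ (X i) - X i) =
              (φ g - g) + (g - (k : MvPolynomial (Fin n) K) * (φ (X i) - X i)) := by
            rw [hpow, hg]
            rw [show φ ((φ ^ k) (X i)) = φ (X i + ((φ ^ k) (X i) - X i)) by ring_nf]
            rw [map_add]
            ring
          rw [Nat.cast_add, Nat.cast_one] at *
          rw [heq]
          exact (augIdeal K n ^ (d + 1)).add_mem hφg ihk
      -- specialize at k = m
      have hm0 : (φ ^ m) (X i) = X i := by rw [hφm]; rfl
      have h1 := iter m
      rw [hm0, sub_self, zero_sub] at h1
      have h2 : (m : MvPolynomial (Fin n) K) * (φ (X i) - X i) ∈ augIdeal K n ^ (d + 1) := by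
        have := (augIdeal K n ^ (d + 1)).neg_mem h1
        simpa using this
      have hmne : (m : K) ≠ 0 := Nat.cast_ne_zero.mpr (by omega)
      have hmC : (m : MvPolynomial (Fin n) K) = C ((m : K)) := by simp
      have heq2 : φ (X i) - X i =
          C ((m : K)⁻¹) * ((m : MvPolynomial (Fin n) K) * (φ (X i) - X i)) := by
        rw [hmC, ← mul_assoc, ← C_mul, inv_mul_cancel₀ hmne, C_1, one_mul]
      rw [heq2]
      exact Ideal.mul_mem_left _ _ h2
  have hall : ∀ i : Fin n, φ (X i) = X i := by
    intro i
    have : φ (X i) - X i = 0 := by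
      refine BardakovAux.eq_zero_of_mem_all fun d => ?_
      rcases le_or_gt 2 d with hd | hd
      · exact key d hd i
      · exact Ideal.pow_le_pow_right (by omega) (hφ i)
    linear_combination this
  have : φ.toAlgHom = (1 : PAut K n).toAlgHom := by
    apply MvPolynomial.algHom_ext
    intro i
    simpa using hall i
  exact AlgEquiv.ext fun p => AlgHom.congr_fun this p
end
end

section
/- Let K be a field of characteristic zero and σ(i, α, f) a non-identity elementary automorphism of P_n = K[x_1,…,x_n]. Then σ(i, α, f) is conjugate in the full automorphism group of P_n to a diagonal automorphism if and only if α ≠ 1. -/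
open MvPolynomial

noncomputable section

/-- An automorphism is diagonal if `δ(x_j) = c_j x_j` with `c_j ≠ 0` for every `j`. -/
def IsDiagonal {K : Type*} [Field K] {n : ℕ} (δ : PAut K n) : Prop :=
  ∀ j : Fin n, ∃ c : K, c ≠ 0 ∧ δ (X j) = C c * X j

/-- Any algebra endomorphism fixing the variables other than `i` fixes every element of the
subalgebra generated by those variables. -/
lemma aux_fix {K : Type*} [Field K] {n : ℕ}
    (ρ : MvPolynomial (Fin n) K →ₐ[K] MvPolynomial (Fin n) K)
    (i : Fin n) (hρ : ∀ j : Fin n, j ≠ i → ρ (X j) = X j)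
    {h : MvPolynomial (Fin n) K}
    (hh : h ∈ Algebra.adjoin K (MvPolynomial.X '' {j : Fin n | j ≠ i})) :
    ρ h = h := by
  induction hh using Algebra.adjoin_induction with
  | mem x hx => obtain ⟨j, hj, rfl⟩ := hx; exact hρ j hj
  | algebraMap r => exact ρ.commutes r
  | add x y _ _ hx hy => rw [map_add, hx, hy]
  | mul x y _ _ hx hy => rw [map_mul, hx, hy]

lemma diag_coeff {K : Type*} [Field K] {n : ℕ} (δ : PAut K n) (c : Fin n → K)
    (hc : ∀ j, δ (X j) = C (c j) * X j) (p : MvPolynomial (Fin n) K)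
    (m : Fin n →₀ ℕ) :
    coeff m (δ p) = (m.prod fun j e => c j ^ e) * coeff m p := by
  have hmono : ∀ (m' : Fin n →₀ ℕ) (a : K),
      δ (monomial m' a) = C (m'.prod fun j e => c j ^ e) * monomial m' a := by
    intro m' a
    rw [monomial_eq, map_mul]
    have hCa : δ (C a) = C a := by
      have := δ.commutes a
      simpa [MvPolynomial.algebraMap_eq] using this
    rw [hCa]
    simp only [Finsupp.prod]
    rw [map_prod]
    simp_rw [map_pow, hc, mul_pow]
    rw [Finset.prod_mul_distrib, map_prod (C : K →+* MvPolynomial (Fin n) K)]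
    simp_rw [map_pow]
    ring
  conv_lhs => rw [p.as_sum, map_sum]
  rw [coeff_sum]
  simp_rw [hmono, coeff_C_mul, coeff_monomial, mul_ite, mul_zero]
  rw [Finset.sum_ite_eq' p.support m]
  by_cases hm : m ∈ p.support
  · simp [hm]
  · simp [hm, MvPolynomial.notMem_support_iff.mp hm]

/-- Key invariant: for a diagonal automorphism, if `δ p = p + q` and `δ q = q`, then `q = 0`. -/
lemma diag_key {K : Type*} [Field K] {n : ℕ} (δ : PAut K n) (hδ : IsDiagonal δ)
    (p q : MvPolynomial (Fin n) K) (hp : δ p = p + q) (hq : δ q = q) : q = 0 := by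
  choose c hc0 hc using hδ
  ext m
  have h1 := congrArg (coeff m) hp
  have h2 := congrArg (coeff m) hq
  rw [diag_coeff δ c hc, coeff_add] at h1
  rw [diag_coeff δ c hc] at h2
  set χ := m.prod fun j e => c j ^ e with hχdef
  by_cases hχ : χ = 1
  · rw [hχ, one_mul] at h1
    have : coeff m q = 0 := by
      have := left_eq_add.mp h1
      exact this
    simpa using this
  · have h3 : (χ - 1) * coeff m q = 0 := by
      rw [sub_mul, one_mul, h2, sub_self]
    rcases mul_eq_zero.mp h3 with h | h
    · exact absurd (sub_eq_zero.mp h) hχ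
    · simpa using h

/-- **Statement 18 (Theorem 7).** A non-identity elementary automorphism `σ(i, α, f)` of
`P_n` is conjugate in `Aut P_n` to a diagonal automorphism if and only if `α ≠ 1`. -/
theorem bardakov_theorem7 (K : Type*) [Field K] [CharZero K] (n : ℕ)
    (i : Fin n) (α : K) (hα : α ≠ 0) (f : MvPolynomial (Fin n) K)
    (hf : f ∈ Algebra.adjoin K (MvPolynomial.X '' {j : Fin n | j ≠ i}))
    (φ : PAut K n)
    (hφ1 : φ (X i) = C α * X i + f)
    (hφ2 : ∀ j : Fin n, j ≠ i → φ (X j) = X j)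
    (hφne : φ ≠ 1) :
    (∃ δ : PAut K n, IsDiagonal δ ∧ IsConj φ δ) ↔ α ≠ 1 := by
  have hφf : φ f = f := by
    have := aux_fix (φ : MvPolynomial (Fin n) K →ₐ[K] MvPolynomial (Fin n) K) i
      (fun j hj => by simpa using hφ2 j hj) hf
    simpa using this
  constructor
  · rintro ⟨δ, hdiag, hconj⟩ hα1
    subst hα1
    -- f ≠ 0, else φ = 1
    have hf0 : f ≠ 0 := by
      intro h0
      apply hφne
      have hAH : (φ : MvPolynomial (Fin n) K →ₐ[K] MvPolynomial (Fin n) K)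
          = AlgHom.id K (MvPolynomial (Fin n) K) := by
        apply MvPolynomial.algHom_ext
        intro j
        by_cases hj : j = i
        · subst hj
          simp [hφ1, h0]
        · simp [hφ2 j hj]
      exact AlgEquiv.ext fun x => by
        have := DFunLike.congr_fun hAH x
        simpa using this
    obtain ⟨u, hu⟩ := isConj_iff.mp hconj
    have huc : ∀ x, δ (u x) = u (φ x) := by
      intro x
      have : u * φ = δ * u := by
        rw [← hu]; group
      have := DFunLike.congr_fun (congrArg (fun (e : PAut K n) => e.toEquiv) this) x
      simpa [AlgEquiv.mul_apply] using this.symm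
    have hXi : φ (X i) = X i + f := by simpa using hφ1
    have hp : δ (u (X i)) = u (X i) + u f := by
      rw [huc, hXi, map_add]
    have hq : δ (u f) = u f := by rw [huc, hφf]
    have := diag_key δ hdiag (u (X i)) (u f) hp hq
    exact hf0 (by simpa using u.injective (by simpa using this))
  · intro hα1
    -- construct the conjugating elementary automorphism ψ : X i ↦ X i + g
    set g : MvPolynomial (Fin n) K := C ((1 - α)⁻¹) * f with hgdef
    have hCmem : (C ((1 - α)⁻¹) : MvPolynomial (Fin n) K)
        ∈ Algebra.adjoin K (MvPolynomial.X '' {j : Fin n | j ≠ i}) := by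
      rw [← MvPolynomial.algebraMap_eq]
      exact Subalgebra.algebraMap_mem _ _
    have hg : g ∈ Algebra.adjoin K (MvPolynomial.X '' {j : Fin n | j ≠ i}) := by
      rw [hgdef]
      exact mul_mem hCmem hf
    have h1α : (1 : K) - α ≠ 0 := sub_ne_zero.mpr (Ne.symm hα1)
    have hfg : f = C (1 - α) * g := by
      rw [hgdef, ← mul_assoc, ← map_mul, mul_inv_cancel₀ h1α, map_one, one_mul]
    set v : Fin n → MvPolynomial (Fin n) K := fun j => if j = i then X i + g else X j with hv
    set w : Fin n → MvPolynomial (Fin n) K := fun j => if j = i then X i - g else X j with hw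
    have hvX : ∀ j : Fin n, j ≠ i → (aeval v : MvPolynomial (Fin n) K →ₐ[K] _) (X j) = X j := by
      intro j hj; simp [hv, hj]
    have hwX : ∀ j : Fin n, j ≠ i → (aeval w : MvPolynomial (Fin n) K →ₐ[K] _) (X j) = X j := by
      intro j hj; simp [hw, hj]
    have hvg : aeval v g = g := aux_fix _ i hvX hg
    have hwg : aeval w g = g := aux_fix _ i hwX hg
    have hcomp1 : (aeval v).comp (aeval w) = AlgHom.id K (MvPolynomial (Fin n) K) := by
      apply MvPolynomial.algHom_ext
      intro j
      by_cases hj : j = i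
      · rw [hj]
        simp only [AlgHom.comp_apply, aeval_X, AlgHom.id_apply]
        rw [show w i = X i - g by simp [hw]]
        rw [map_sub, aeval_X, hvg]
        simp [hv]
      · simp [AlgHom.comp_apply, hw, hv, hj]
    have hcomp2 : (aeval w).comp (aeval v) = AlgHom.id K (MvPolynomial (Fin n) K) := by
      apply MvPolynomial.algHom_ext
      intro j
      by_cases hj : j = i
      · rw [hj]
        simp only [AlgHom.comp_apply, aeval_X, AlgHom.id_apply]
        rw [show v i = X i + g by simp [hv]]
        rw [map_add, aeval_X, hwg]
        simp [hw]
      · simp [AlgHom.comp_apply, hw, hv, hj]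
    set ψ : PAut K n := AlgEquiv.ofAlgHom (aeval v) (aeval w) hcomp1 hcomp2 with hψ
    have hψapp : ∀ x, ψ x = aeval v x := fun x => rfl
    have hψsymm : ∀ x, ψ.symm x = aeval w x := fun x => rfl
    have hψg : ψ g = g := by rw [hψapp]; exact hvg
    have hψinv : (ψ⁻¹ : PAut K n) = ψ.symm := rfl
    have hφg : φ g = g :=
      aux_fix (φ : MvPolynomial (Fin n) K →ₐ[K] MvPolynomial (Fin n) K) i
        (fun j hj => by simpa using hφ2 j hj) hg
    refine ⟨ψ * φ * ψ⁻¹, ?_, ?_⟩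
    · intro j
      by_cases hj : j = i
      · refine ⟨α, hα, ?_⟩
        rw [hj]
        rw [AlgEquiv.mul_apply, AlgEquiv.mul_apply, hψinv, hψsymm]
        have : (aeval w : MvPolynomial (Fin n) K →ₐ[K] MvPolynomial (Fin n) K) (X i)
            = X i - g := by simp [hw]
        rw [this, map_sub, hφ1, hφg, hfg]
        have : C α * X i + C (1 - α) * g - g = C α * (X i - g) := by
          rw [map_sub, map_one]; ring
        rw [this, map_mul, map_sub, hψg]
        have hψCα : ψ (C α) = C α := by rw [hψapp]; simp
        have hψXi : ψ (X i) = X i + g := by rw [hψapp]; simp [hv]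
        rw [hψCα, hψXi]
        ring
      · refine ⟨1, one_ne_zero, ?_⟩
        rw [AlgEquiv.mul_apply, AlgEquiv.mul_apply, hψinv, hψsymm]
        have : (aeval w : MvPolynomial (Fin n) K →ₐ[K] MvPolynomial (Fin n) K) (X j)
            = X j := hwX j hj
        rw [this, hφ2 j hj, hψapp, hvX j hj, map_one, one_mul]
    · exact isConj_iff.mpr ⟨ψ, rfl⟩

end
end
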